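/- Let G = ℤ^k × F with F a finite group, and let φ : G → G be an endomorphism with φ(F) ⊆ F. Let φ^{finite} : F → F be the restriction of φ to F, and let M be the integer matrix of the ℤ^k-component of φ restricted to ℤ^k. If det(I − M) ≠ 0, then R(φ) = R(φ^{finite}) · |det(I − M)|; equivalently R(φ) = R(φ^{finite}) · R(φ^∞), where φ^∞ : G/F → G/F is the induced endomorphism of the quotient G/F ≅ ℤ^k. -/

import Mathlib

section aux
lemma aux_mulVec_inj {k : ℕ} (N : Matrix (Fin k) (Fin k) ℤ) (h : N.det ≠ 0) :
    Function.Injective N.mulVec := by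
  intro x y hxy
  have h2 : (N.adjugate * N).mulVec x = (N.adjugate * N).mulVec y := by
    rw [← Matrix.mulVec_mulVec, ← Matrix.mulVec_mulVec, hxy]
  rw [Matrix.adjugate_mul, Matrix.smul_mulVec, Matrix.smul_mulVec,
    Matrix.one_mulVec, Matrix.one_mulVec] at h2
  exact smul_right_injective _ h h2
lemma aux_card_quot {k : ℕ} (N : Matrix (Fin k) (Fin k) ℤ) (hdet : N.det ≠ 0) :
    Nat.card ((Fin k → ℤ) ⧸ LinearMap.range (Matrix.toLin' N)) = N.det.natAbs := by
  classical
  have hinj : Function.Injective (Matrix.toLin' N) := by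
    exact fun x y hxy => aux_mulVec_inj N hdet (by rwa [Matrix.toLin'_apply, Matrix.toLin'_apply] at hxy)
  set P : Submodule ℤ (Fin k → ℤ) := LinearMap.range (Matrix.toLin' N) with hP
  obtain ⟨n, snf⟩ := P.smithNormalForm (Pi.basisFun ℤ (Fin k))
  obtain ⟨bM, bN, f, a, hsnf⟩ := snf
  have hn : n = k := by
    have bP : Module.Basis (Fin k) ℤ P :=
      (Pi.basisFun ℤ (Fin k)).map (LinearEquiv.ofInjective (Matrix.toLin' N) hinj)
    have := Module.Basis.indexEquiv bN bP
    simpa using Fintype.card_congr this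
  subst hn
  -- index computation
  have key := Module.Basis.SmithNormalForm.toAddSubgroup_index_eq_pow_mul_prod
    (⟨bM, bN, f, a, hsnf⟩ : Module.Basis.SmithNormalForm P (Fin n) n)
  have hcard : Nat.card ((Fin n → ℤ) ⧸ P) = P.toAddSubgroup.index := rfl
  have hspan : ∀ x : ℤ, (Ideal.span {x}).toAddSubgroup.index = x.natAbs := by
    intro x
    have : (Ideal.span {x}).toAddSubgroup = AddSubgroup.zmultiples x := by
      ext y
      simp [Ideal.mem_span_singleton, AddSubgroup.mem_zmultiples_iff, dvd_iff_exists_eq_mul_left,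
        mul_comm, eq_comm, zsmul_eq_mul]
    rw [this, Int.index_zmultiples]
  have hprod : P.toAddSubgroup.index = ∏ i : Fin n, (a i).natAbs := by
    rw [key]
    simp [hspan]
  -- determinant computation
  have σbij : Function.Bijective f := Finite.injective_iff_bijective.mp f.injective
  set σ : Equiv.Perm (Fin n) := Equiv.ofBijective f σbij with hσ
  set e : (Fin n → ℤ) ≃ₗ[ℤ] P := bM.equiv bN (Equiv.refl _) with he
  set h : (Fin n → ℤ) →ₗ[ℤ] (Fin n → ℤ) := P.subtype ∘ₗ e.toLinearMap with hh
  have hT : LinearMap.toMatrix bM bM h = (Matrix.diagonal a).submatrix σ.symm id := by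
    ext i j
    rw [LinearMap.toMatrix_apply]
    have : h (bM j) = a j • bM (f j) := by
      rw [hh]
      simp only [LinearMap.comp_apply, LinearEquiv.coe_toLinearMap, he]
      rw [Module.Basis.equiv_apply]
      simpa using hsnf j
    rw [this]
    simp only [map_smul, Module.Basis.repr_self, Finsupp.smul_single, smul_eq_mul, mul_one,
      Finsupp.single_apply, Matrix.submatrix_apply, id_eq, Matrix.diagonal_apply]
    have hiff : f j = i ↔ σ.symm i = j := by
      constructor
      · rintro rfl; exact σ.symm_apply_apply j
      · rintro rfl; exact (σ.apply_symm_apply i)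
    by_cases hc : f j = i
    · rw [if_pos hc, if_pos (hiff.mp hc), hiff.mp hc]
    · rw [if_neg hc, if_neg (fun hc' => hc (hiff.mpr hc'))]
  have hdetT : (LinearMap.det h).natAbs = ∏ i : Fin n, (a i).natAbs := by
    rw [← LinearMap.det_toMatrix bM, hT]
    have : ((Matrix.diagonal a).submatrix σ.symm id).det
        = (Equiv.Perm.sign σ.symm : ℤ) * (Matrix.diagonal a).det :=
      Matrix.det_permute σ.symm (Matrix.diagonal a)
    rw [this, Int.natAbs_mul, Matrix.det_diagonal]
    have habs : (∏ i : Fin n, a i).natAbs = ∏ i : Fin n, (a i).natAbs :=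
      map_prod Int.natAbsHom a Finset.univ
    rcases Int.units_eq_one_or (Equiv.Perm.sign σ.symm) with hs | hs <;>
      simp [hs, habs]
  -- relate det h with det N
  have hassoc : Associated (LinearMap.det (Matrix.toLin' N)) (LinearMap.det h) := by
    refine LinearMap.associated_det_of_eq_comp
      ((LinearEquiv.ofInjective (Matrix.toLin' N) hinj).trans e.symm) _ _ ?_
    intro x
    simp [hh, LinearEquiv.ofInjective_apply]
  have : N.det.natAbs = ∏ i : Fin n, (a i).natAbs := by
    rw [← LinearMap.det_toLin' N, Int.natAbs_eq_iff_associated.mpr hassoc, hdetT]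
  rw [hcard, hprod, this]

end aux


/-- Two elements `a`, `b` of a group are `φ`-conjugate if `b = γ * a * (φ γ)⁻¹` for some `γ`. -/
def phiConj {G : Type*} [Group G] (φ : G → G) (a b : G) : Prop :=
  ∃ γ : G, b = γ * a * (φ γ)⁻¹

/-- The Reidemeister number of `φ`: the number of `φ`-conjugacy classes
(`0` if there are infinitely many). -/
noncomputable def reidemeisterNumber {G : Type*} [Group G] (φ : G → G) : ℕ :=
  Nat.card (Quot (phiConj φ))


/-- for `G = ℤ^k × F` (`F` finite) and an endomorphism `φ` with
`φ(v,f) = (M·v, ψ(v)·φ^finite(f))` and `det(I - M) ≠ 0`,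
`R(φ) = R(φ^finite) · |det(I - M)|` (and `|det(I - M)|` is the Reidemeister number of the
induced endomorphism `φ^∞` of the quotient `G/F ≅ ℤ^k`, given by `M`). -/
theorem stmt9 (k : ℕ) {F : Type*} [Group F] [Finite F]
    (φ : Multiplicative (Fin k → ℤ) × F →* Multiplicative (Fin k → ℤ) × F)
    (M : Matrix (Fin k) (Fin k) ℤ) (ψ : (Fin k → ℤ) → F) (φF : F →* F)
    (hφ : ∀ (v : Fin k → ℤ) (f : F),
      φ (Multiplicative.ofAdd v, f) = (Multiplicative.ofAdd (M.mulVec v), ψ v * φF f))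
    (hdet : (1 - M).det ≠ 0) :
    reidemeisterNumber ⇑φ = reidemeisterNumber ⇑φF * (1 - M).det.natAbs := by

  classical
  set N : Matrix (Fin k) (Fin k) ℤ := 1 - M with hN
  have hNmul : ∀ u, N.mulVec u = u - M.mulVec u := by
    intro u
    rw [hN, Matrix.sub_mulVec, Matrix.one_mulVec]
  have hNinj : Function.Injective N.mulVec := aux_mulVec_inj N hdet
  -- facts about ψ
  have hadd : ∀ v w : Fin k → ℤ, ψ (v + w) = ψ v * ψ w := by
    intro v w
    have h2 := φ.map_mul (Multiplicative.ofAdd v, (1:F)) (Multiplicative.ofAdd w, 1)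
    rw [show (Multiplicative.ofAdd v, (1:F)) * (Multiplicative.ofAdd w, 1)
        = (Multiplicative.ofAdd (v+w), 1) by
      rw [Prod.mk_mul_mk, mul_one, ofAdd_add]] at h2
    rw [hφ, hφ, hφ] at h2
    have h3 := congrArg Prod.snd h2
    simpa using h3
  have hψ0 : ψ 0 = 1 := by
    have := hadd 0 0
    rw [add_zero] at this
    exact left_eq_mul.mp this
  have hneg : ∀ v, ψ (-v) = (ψ v)⁻¹ := by
    intro v
    refine eq_inv_of_mul_eq_one_left ?_
    rw [← hadd, neg_add_cancel, hψ0]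
  have hsub : ∀ v w, ψ (v - w) = ψ v * (ψ w)⁻¹ := by
    intro v w
    rw [sub_eq_add_neg, hadd, hneg]
  have hcommC : ∀ (v : Fin k → ℤ) (g : F), Commute (ψ v) (φF g) := by
    intro v g
    have h2 := φ.map_mul (Multiplicative.ofAdd 0, g) (Multiplicative.ofAdd v, (1:F))
    rw [show (Multiplicative.ofAdd 0, g) * (Multiplicative.ofAdd v, (1:F))
        = (Multiplicative.ofAdd (0+v), g) by
      rw [Prod.mk_mul_mk, mul_one, ofAdd_add]] at h2
    rw [hφ, hφ, hφ] at h2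
    have h3 := congrArg Prod.snd h2
    simp only [Prod.snd_mul, zero_add, map_one, mul_one, hψ0, one_mul] at h3
    exact h3
  have hcommψ : ∀ v w, ψ v * ψ w = ψ w * ψ v := by
    intro v w
    rw [← hadd, ← hadd, add_comm]
  -- the quotient lattice
  set P : Submodule ℤ (Fin k → ℤ) := LinearMap.range (Matrix.toLin' N) with hP
  have hmemP : ∀ u, N.mulVec u ∈ P := fun u => ⟨u, by simp [Matrix.toLin'_apply]⟩
  -- normalization
  have hex : ∀ v : Fin k → ℤ, ∃ u, N.mulVec u
      = v - Quotient.out (Submodule.Quotient.mk (p := P) v) := by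
    intro v
    have hmk : Submodule.Quotient.mk (p := P)
        (Quotient.out (Submodule.Quotient.mk (p := P) v)) = Submodule.Quotient.mk v := by
      rw [← Submodule.Quotient.mk''_eq_mk]
      exact Quotient.out_eq' _
    have := (Submodule.Quotient.eq P).mp hmk.symm
    obtain ⟨u, hu⟩ := this
    exact ⟨u, by rw [← Matrix.toLin'_apply, hu]⟩
  set s : (Fin k → ℤ) → (Fin k → ℤ) := fun v => Classical.choose (hex v) with hs_def
  have hs : ∀ v, N.mulVec (s v)
      = v - Quotient.out (Submodule.Quotient.mk (p := P) v) :=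
    fun v => Classical.choose_spec (hex v)
  have hmk_add : ∀ (v u : Fin k → ℤ),
      Submodule.Quotient.mk (p := P) (v + N.mulVec u) = Submodule.Quotient.mk v := by
    intro v u
    rw [Submodule.Quotient.eq]
    simpa using hmemP u
  have hs2 : ∀ v u, s (v + N.mulVec u) = s v + u := by
    intro v u
    apply hNinj
    rw [Matrix.mulVec_add, hs, hs, hmk_add]
    abel
  have hs0 : ∀ q : (Fin k → ℤ) ⧸ P, s (Quotient.out q) = 0 := by
    intro q
    apply hNinj
    rw [hs, Matrix.mulVec_zero]
    have hmk : Submodule.Quotient.mk (p := P) (Quotient.out q) = q := by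
      rw [← Submodule.Quotient.mk''_eq_mk]
      exact Quotient.out_eq' _
    rw [hmk, sub_self]
  -- conjugation computation
  have hprod : ∀ (u v : Fin k → ℤ) (g f : F),
      (Multiplicative.ofAdd u, g) * (Multiplicative.ofAdd v, f)
        * (φ (Multiplicative.ofAdd u, g))⁻¹
      = (Multiplicative.ofAdd (v + N.mulVec u), g * f * (φF g)⁻¹ * (ψ u)⁻¹) := by
    intro u v g f
    rw [hφ]
    refine Prod.ext ?_ ?_
    · show Multiplicative.ofAdd u * Multiplicative.ofAdd v
        * (Multiplicative.ofAdd (M.mulVec u))⁻¹ = Multiplicative.ofAdd (v + N.mulVec u)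
      rw [hNmul, ← ofAdd_neg, ← ofAdd_add, ← ofAdd_add]
      congr 1
      abel
    · show g * f * (ψ u * φF g)⁻¹ = g * f * (φF g)⁻¹ * (ψ u)⁻¹
      rw [mul_inv_rev, ← mul_assoc]
  have hconj : ∀ (v : Fin k → ℤ) (f : F) (b : Multiplicative (Fin k → ℤ) × F),
      phiConj ⇑φ (Multiplicative.ofAdd v, f) b ↔
      ∃ u g, b = (Multiplicative.ofAdd (v + N.mulVec u), g * f * (φF g)⁻¹ * (ψ u)⁻¹) := by
    intro v f b
    constructor
    · rintro ⟨⟨um, g⟩, rfl⟩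
      refine ⟨um.toAdd, g, ?_⟩
      have h5 := hprod um.toAdd v g f
      simpa only [ofAdd_toAdd] using h5
    · rintro ⟨u, g, rfl⟩
      exact ⟨(Multiplicative.ofAdd u, g), (hprod u v g f).symm⟩
  -- phiConj φF is an equivalence
  have hEq : Equivalence (phiConj ⇑φF) := by
    constructor
    · intro a; exact ⟨1, by simp⟩
    · rintro a b ⟨γ, rfl⟩
      refine ⟨γ⁻¹, ?_⟩
      rw [map_inv]
      group
    · rintro a b c ⟨γ, rfl⟩ ⟨δ, rfl⟩
      refine ⟨δ * γ, ?_⟩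
      rw [map_mul]
      group
  have hQuotEq : ∀ x y : F, Quot.mk (phiConj ⇑φF) x = Quot.mk (phiConj ⇑φF) y ↔
      phiConj ⇑φF x y := by
    intro x y
    rw [Quot.eq, Equivalence.eqvGen_iff hEq]
  -- the bijection
  set Φ : Multiplicative (Fin k → ℤ) × F → Quot (phiConj ⇑φF) × ((Fin k → ℤ) ⧸ P) :=
    fun x => (Quot.mk _ (x.2 * ψ (s x.1.toAdd)), Submodule.Quotient.mk x.1.toAdd) with hΦ
  have hwd : ∀ a b, phiConj ⇑φ a b → Φ a = Φ b := by
    rintro ⟨vm, f⟩ b hab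
    obtain ⟨u, g, rfl⟩ := (hconj vm.toAdd f b).mp hab
    set v : Fin k → ℤ := vm.toAdd
    refine Prod.ext ?_ ?_
    · show Quot.mk _ (f * ψ (s v)) = Quot.mk _ (g * f * (φF g)⁻¹ * (ψ u)⁻¹ * ψ (s (v + N.mulVec u)))
      rw [hQuotEq]
      refine ⟨g, ?_⟩
      rw [hs2, hadd]
      have c1 : (ψ u)⁻¹ * (ψ (s v) * ψ u) = ψ (s v) := by
        rw [hcommψ (s v) u, ← mul_assoc, inv_mul_cancel, one_mul]
      calc g * f * (φF g)⁻¹ * (ψ u)⁻¹ * (ψ (s v) * ψ u)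
          = g * f * (φF g)⁻¹ * ψ (s v) := by rw [mul_assoc _ (ψ u)⁻¹, c1]
        _ = g * f * ((φF g)⁻¹ * ψ (s v)) := by rw [mul_assoc]
        _ = g * f * (ψ (s v) * (φF g)⁻¹) := by rw [(hcommC (s v) g).inv_right.eq]
        _ = g * (f * ψ (s v)) * (φF g)⁻¹ := by simp only [mul_assoc]
    · show Submodule.Quotient.mk v = Submodule.Quotient.mk (v + N.mulVec u)
      exact (hmk_add v u).symm
  have hinj2 : ∀ a b, Φ a = Φ b → phiConj ⇑φ a b := by
    rintro ⟨vm, f⟩ ⟨vm', f'⟩ hab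
    set v : Fin k → ℤ := vm.toAdd
    set v' : Fin k → ℤ := vm'.toAdd
    have h1 : Quot.mk (phiConj ⇑φF) (f * ψ (s v)) = Quot.mk (phiConj ⇑φF) (f' * ψ (s v')) :=
      congrArg Prod.fst hab
    have h2 : Submodule.Quotient.mk (p := P) v = Submodule.Quotient.mk v' :=
      congrArg Prod.snd hab
    obtain ⟨g, hg⟩ := (hQuotEq _ _).mp h1
    -- hg : f' * ψ (s v') = g * (f * ψ (s v)) * (φF g)⁻¹
    refine (hconj v f (vm', f')).mpr ⟨s v' - s v, g, ?_⟩
    have hNu : N.mulVec (s v' - s v) = v' - v := by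
      rw [Matrix.mulVec_sub, hs, hs, h2]
      abel
    refine Prod.ext ?_ ?_
    · show vm' = Multiplicative.ofAdd (v + N.mulVec (s v' - s v))
      rw [hNu]
      show Multiplicative.ofAdd v' = Multiplicative.ofAdd (v + (v' - v))
      congr 1
      abel
    · show f' = g * f * (φF g)⁻¹ * (ψ (s v' - s v))⁻¹
      have hf' : f' = g * (f * ψ (s v)) * (φF g)⁻¹ * (ψ (s v'))⁻¹ := by
        rw [← hg]; group
      rw [hf', hsub, mul_inv_rev, inv_inv]
      calc g * (f * ψ (s v)) * (φF g)⁻¹ * (ψ (s v'))⁻¹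
          = g * f * (ψ (s v) * (φF g)⁻¹) * (ψ (s v'))⁻¹ := by simp only [mul_assoc]
        _ = g * f * ((φF g)⁻¹ * ψ (s v)) * (ψ (s v'))⁻¹ := by
            rw [(hcommC (s v) g).inv_right.eq]
        _ = g * f * (φF g)⁻¹ * (ψ (s v) * (ψ (s v'))⁻¹) := by simp only [mul_assoc]
  -- surjectivity
  have hsurj : ∀ t : Quot (phiConj ⇑φF) × ((Fin k → ℤ) ⧸ P), ∃ a, Φ a = t := by
    rintro ⟨t1, q⟩
    induction t1 using Quot.ind with
    | _ f0 =>
      refine ⟨(Multiplicative.ofAdd (Quotient.out q), f0), ?_⟩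
      have hmk : Submodule.Quotient.mk (p := P) (Quotient.out q) = q := by
        rw [← Submodule.Quotient.mk''_eq_mk]
        exact Quotient.out_eq' _
      refine Prod.ext ?_ ?_
      · show Quot.mk _ (f0 * ψ (s (Quotient.out q))) = Quot.mk _ f0
        rw [hs0, hψ0, mul_one]
      · exact hmk
  -- assemble
  let Φbar : Quot (phiConj ⇑φ) → Quot (phiConj ⇑φF) × ((Fin k → ℤ) ⧸ P) :=
    Quot.lift Φ hwd
  have hbij : Function.Bijective Φbar := by
    constructor
    · intro x y
      induction x using Quot.ind with
      | _ a =>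
        induction y using Quot.ind with
        | _ b =>
          intro hxy
          exact Quot.sound (hinj2 a b hxy)
    · intro t
      obtain ⟨a, ha⟩ := hsurj t
      exact ⟨Quot.mk _ a, ha⟩
  have hcard : Nat.card (Quot (phiConj ⇑φ))
      = Nat.card (Quot (phiConj ⇑φF) × ((Fin k → ℤ) ⧸ P)) :=
    Nat.card_eq_of_bijective Φbar hbij
  rw [reidemeisterNumber, reidemeisterNumber, hcard, Nat.card_prod]
  congr 1
  exact aux_card_quot N hdet
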